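/- Let K > 0 and let η : ℝ → ℝ be twice differentiable on [0, K] with η(K) = 0 and k·η''(k) + 2·η'(k) ≤ 0 for all k ∈ [0, K]. Then the function g(k) = k·η(k)/(1 − k/K) is monotone nondecreasing on [0, K), and its supremum over [0, K) equals −η'(K)·K² (which is also its limit as k → K⁻). Consequently, the collision-free condition ΔN/Δt ≥ sup_{k∈[0,K)} k·η(k)/(1 − k/K) is equivalent to ΔN/Δt ≥ −η'(K)·K². -/

import Mathlib

/-- For a concave fundamental diagram, `g(k) = k·η(k)/(1 − k/K)` is nondecreasing
on `[0,K)`, its supremum over `[0,K)` is `−η'(K)·K²` (which is also its limit as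
`k → K⁻`), and hence the collision-free condition `ΔN/Δt ≥ sup g` is equivalent to
`ΔN/Δt ≥ −η'(K)·K²`. -/
theorem collision_free_condition_concave (K ΔN Δt : ℝ) (hK : 0 < K)
    (hΔN : 0 < ΔN) (hΔt : 0 < Δt) (η η' η'' : ℝ → ℝ)
    (hd1 : ∀ k ∈ Set.Icc (0 : ℝ) K, HasDerivWithinAt η (η' k) (Set.Icc (0 : ℝ) K) k)
    (hd2 : ∀ k ∈ Set.Icc (0 : ℝ) K, HasDerivWithinAt η' (η'' k) (Set.Icc (0 : ℝ) K) k)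
    (hηK : η K = 0)
    (hconc : ∀ k ∈ Set.Icc (0 : ℝ) K, k * η'' k + 2 * η' k ≤ 0) :
    MonotoneOn (fun k => k * η k / (1 - k / K)) (Set.Ico (0 : ℝ) K) ∧
    sSup ((fun k => k * η k / (1 - k / K)) '' Set.Ico (0 : ℝ) K) = -η' K * K ^ 2 ∧
    Filter.Tendsto (fun k => k * η k / (1 - k / K)) (nhdsWithin K (Set.Iio K))
      (nhds (-η' K * K ^ 2)) ∧
    (ΔN / Δt ≥ sSup ((fun k => k * η k / (1 - k / K)) '' Set.Ico (0 : ℝ) K) ↔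
      ΔN / Δt ≥ -η' K * K ^ 2) := by
  set φ : ℝ → ℝ := fun k => k * η k with hφ
  set φ' : ℝ → ℝ := fun k => η k + k * η' k with hφ'
  set g : ℝ → ℝ := fun k => k * η k / (1 - k / K) with hg
  have hKmem : K ∈ Set.Icc (0 : ℝ) K := Set.right_mem_Icc.2 hK.le
  -- derivatives of φ
  have hφd : ∀ k ∈ Set.Icc (0 : ℝ) K,
      HasDerivWithinAt φ (φ' k) (Set.Icc (0 : ℝ) K) k := by
    intro k hk
    have := ((hasDerivWithinAt_id k (Set.Icc (0:ℝ) K)).mul (hd1 k hk))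
    exact (this.congr_deriv (by simp [φ'])).congr (fun x _ => by simp [φ]) (by simp [φ])
  have hφ'd : ∀ k ∈ Set.Icc (0 : ℝ) K,
      HasDerivWithinAt φ' (η' k + (η' k + k * η'' k)) (Set.Icc (0 : ℝ) K) k := by
    intro k hk
    have h := (hd1 k hk).add ((hasDerivWithinAt_id k _).mul (hd2 k hk))
    exact h.congr_deriv (by simp [id]; try ring)
  -- φ is concave on [0,K]
  have hint : interior (Set.Icc (0:ℝ) K) = Set.Ioo 0 K := interior_Icc
  have hconcave : ConcaveOn ℝ (Set.Icc (0:ℝ) K) φ := by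
    apply concaveOn_of_hasDerivWithinAt2_nonpos (f' := φ')
      (f'' := fun k => η' k + (η' k + k * η'' k)) (convex_Icc 0 K)
    · intro x hx
      exact (hφd x hx).continuousWithinAt
    · intro x hx
      rw [hint] at hx
      exact (hφd x (Set.Ioo_subset_Icc_self hx)).mono
        (by rw [hint]; exact Set.Ioo_subset_Icc_self)
    · intro x hx
      rw [hint] at hx
      exact (hφ'd x (Set.Ioo_subset_Icc_self hx)).mono
        (by rw [hint]; exact Set.Ioo_subset_Icc_self)
    · intro x hx
      rw [hint] at hx
      have := hconc x (Set.Ioo_subset_Icc_self hx)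
      linarith
  -- slope of φ at K is antitone on [0,K)
  have hsub : Set.Ico (0:ℝ) K ⊆ Set.Icc 0 K \ {K} := by
    intro x hx
    exact ⟨⟨hx.1, hx.2.le⟩, ne_of_lt hx.2⟩
  have hanti : AntitoneOn (slope φ K) (Set.Ico (0:ℝ) K) :=
    (hconcave.slope_anti hKmem).mono hsub
  -- slope tends to φ'(K) = K * η' K as k → K⁻
  have hφK : φ K = 0 := by simp [φ, hηK]
  have hφ'K : φ' K = K * η' K := by simp [φ', hηK]
  have hslope_tendsto : Filter.Tendsto (slope φ K) (nhdsWithin K (Set.Iio K))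
      (nhds (K * η' K)) := by
    have h1 : Filter.Tendsto (slope φ K)
        (nhdsWithin K (Set.Icc (0:ℝ) K \ {K})) (nhds (φ' K)) :=
      hasDerivWithinAt_iff_tendsto_slope.1 (hφd K hKmem)
    rw [hφ'K] at h1
    have h2 : nhdsWithin K (Set.Iio K) = nhdsWithin K (Set.Ioo (0:ℝ) K) :=
      (nhdsWithin_Ioo_eq_nhdsLT hK).symm
    rw [h2]
    exact h1.mono_left (nhdsWithin_mono K (fun x hx => hsub ⟨hx.1.le, hx.2⟩))
  -- g k = -K * slope φ K k on [0,K)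
  have hgeq : ∀ k ∈ Set.Ico (0:ℝ) K, g k = -K * slope φ K k := by
    intro k hk
    have hkK : k ≠ K := ne_of_lt hk.2
    have h2 : k - K ≠ 0 := sub_ne_zero.2 hkK
    have hden : (1 : ℝ) - k / K ≠ 0 := by
      have : k / K < 1 := (div_lt_one hK).2 hk.2
      linarith
    rw [slope_def_field, hφK, sub_zero]
    show k * η k / (1 - k / K) = -K * (φ k / (k - K))
    rw [mul_div_assoc', div_eq_div_iff hden h2]
    field_simp [φ, hK.ne']
    ring
  -- monotone
  have hmono : MonotoneOn g (Set.Ico (0:ℝ) K) := by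
    intro a ha b hb hab
    rw [hgeq a ha, hgeq b hb]
    have := hanti ha hb hab
    nlinarith
  -- g tends to -η' K * K^2
  have hgtendsto : Filter.Tendsto g (nhdsWithin K (Set.Iio K))
      (nhds (-η' K * K ^ 2)) := by
    have h1 : Filter.Tendsto (fun k => -K * slope φ K k) (nhdsWithin K (Set.Iio K))
        (nhds (-K * (K * η' K))) := hslope_tendsto.const_mul _
    have h2 : -K * (K * η' K) = -η' K * K ^ 2 := by ring
    rw [h2] at h1
    refine h1.congr' ?_
    filter_upwards [Ioo_mem_nhdsLT_of_mem (by constructor <;> [exact hK; rfl] :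
      K ∈ Set.Ioc (0:ℝ) K)] with x hx
    exact (hgeq x ⟨hx.1.le, hx.2⟩).symm
  -- upper bound : slope φ K k ≥ K * η' K on [0,K)
  have hub : ∀ k ∈ Set.Ico (0:ℝ) K, g k ≤ -η' K * K ^ 2 := by
    intro k hk
    have hle : K * η' K ≤ slope φ K k := by
      refine le_of_tendsto hslope_tendsto ?_
      filter_upwards [Ioo_mem_nhdsLT_of_mem (Set.right_mem_Ioc.2 hk.2 :
        K ∈ Set.Ioc k K)] with x hx
      exact hanti hk ⟨hk.1.trans (hx.1.le), hx.2⟩ hx.1.le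
    rw [hgeq k hk]
    nlinarith
  -- the supremum
  have hlub : IsLUB (g '' Set.Ico (0:ℝ) K) (-η' K * K ^ 2) := by
    constructor
    · rintro y ⟨x, hx, rfl⟩
      exact hub x hx
    · intro b hb
      refine le_of_tendsto hgtendsto ?_
      filter_upwards [Ioo_mem_nhdsLT_of_mem (by constructor <;> [exact hK; rfl] :
        K ∈ Set.Ioc (0:ℝ) K)] with x hx
      exact hb ⟨x, ⟨hx.1.le, hx.2⟩, rfl⟩
  have hsup : sSup (g '' Set.Ico (0:ℝ) K) = -η' K * K ^ 2 :=
    hlub.csSup_eq ⟨g 0, 0, ⟨le_refl 0, hK⟩, rfl⟩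
  exact ⟨hmono, hsup, hgtendsto, by rw [hsup]⟩
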